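/- For every real number k < 1 and every A ∈ (0,1) there is a constant C > 0 such that for every measurable function f : (0,A) → ℂ one has ∫₀^A r^{-1} (-log r)^{k-2} ( ∫_r^A |f(ρ)| dρ )² dr ≤ C · ∫₀^A |f(r)|² r (-log r)^k dr (an inequality in [0, ∞]). -/

import Mathlib

open MeasureTheory
open scoped ENNReal

lemma loglint {t : ℝ} (ht : t ≠ 0) {a b : ℝ} (ha : 0 < a) (hab : a ≤ b) (hb : b < 1) :
    ∫⁻ r in Set.Ioo a b, ENNReal.ofReal (r⁻¹ * (-Real.log r) ^ (t - 1)) =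
      ENNReal.ofReal (((-Real.log a) ^ t - (-Real.log b) ^ t) / t) := by
  have hpos : ∀ x ∈ Set.Icc a b, 0 < x ∧ 0 < -Real.log x := by
    intro x hx
    have hx0 : 0 < x := lt_of_lt_of_le ha hx.1
    have hx1 : x < 1 := lt_of_le_of_lt hx.2 hb
    exact ⟨hx0, by simpa using Real.log_neg hx0 hx1⟩
  have hderiv : ∀ x ∈ Set.uIcc a b,
      HasDerivAt (fun y => -((-Real.log y) ^ t / t)) (x⁻¹ * (-Real.log x) ^ (t - 1)) x := by
    intro x hx
    rw [Set.uIcc_of_le hab] at hx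
    obtain ⟨hx0, hlx⟩ := hpos x hx
    have h1 : HasDerivAt (fun y => -Real.log y) (-x⁻¹) x :=
      (Real.hasDerivAt_log hx0.ne').neg
    have h2 : HasDerivAt (fun y : ℝ => y ^ t) (t * (-Real.log x) ^ (t - 1)) (-Real.log x) :=
      Real.hasDerivAt_rpow_const (Or.inl hlx.ne')
    have h3 := (h2.comp x h1)
    have h4 := (h3.div_const t).neg
    refine h4.congr_deriv ?_
    field_simp
  have hcont : ContinuousOn (fun r => r⁻¹ * (-Real.log r) ^ (t - 1)) (Set.Icc a b) := by
    apply ContinuousOn.mul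
    · exact continuousOn_inv₀.mono (fun x hx => (hpos x hx).1.ne')
    · exact (Real.continuousOn_log.mono (fun x hx => (hpos x hx).1.ne')).neg.rpow_const
        (fun x hx => Or.inl (hpos x hx).2.ne')
  have hint : IntervalIntegrable (fun r => r⁻¹ * (-Real.log r) ^ (t - 1)) volume a b := by
    apply ContinuousOn.intervalIntegrable
    rwa [Set.uIcc_of_le hab]
  have key := intervalIntegral.integral_eq_sub_of_hasDerivAt hderiv hint
  rw [intervalIntegral.integral_of_le hab] at key
  have hIoc : IntegrableOn (fun r => r⁻¹ * (-Real.log r) ^ (t - 1)) (Set.Ioc a b) volume :=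
    (hcont.integrableOn_compact isCompact_Icc).mono_set Set.Ioc_subset_Icc_self
  have hnn : 0 ≤ᵐ[volume.restrict (Set.Ioc a b)] fun r => r⁻¹ * (-Real.log r) ^ (t - 1) := by
    filter_upwards [ae_restrict_mem measurableSet_Ioc] with x hx
    obtain ⟨hx0, hlx⟩ := hpos x (Set.Ioc_subset_Icc_self hx)
    positivity
  rw [Measure.restrict_congr_set Ioo_ae_eq_Ioc,
    ← ofReal_integral_eq_lintegral_ofReal hIoc hnn, key]
  congr 1
  ring

lemma inner_bound {ε ρ : ℝ} (hε : 0 < ε) (hρ0 : 0 < ρ) (hρ1 : ρ < 1) :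
    ∫⁻ r in Set.Ioo 0 ρ, ENNReal.ofReal (r⁻¹ * (-Real.log r) ^ (-ε - 1)) ≤
      ENNReal.ofReal ((-Real.log ρ) ^ (-ε) / ε) := by
  set W : ℝ → ℝ≥0∞ := fun r => ENNReal.ofReal (r⁻¹ * (-Real.log r) ^ (-ε - 1)) with hW
  have hWm : Measurable W := by
    apply Measurable.ennreal_ofReal
    exact measurable_inv.mul ((Real.measurable_log.neg).pow_const _)
  have hsub : ∀ n : ℕ, Set.Ioo (ρ/(n+2)) ρ ⊆ Set.Ioo 0 ρ := fun n =>
    Set.Ioo_subset_Ioo (by positivity) le_rfl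
  have hmono : Monotone (fun n : ℕ => (Set.Ioo (ρ/(n+2)) ρ).indicator W) := by
    intro m n hmn
    apply Set.indicator_le_indicator_of_subset _ (fun _ => zero_le)
    apply Set.Ioo_subset_Ioo _ le_rfl
    apply div_le_div_of_nonneg_left hρ0.le (by positivity)
    have : (m : ℝ) ≤ n := Nat.cast_le.mpr hmn
    linarith
  have hsup : (Set.Ioo (0:ℝ) ρ).indicator W
      = fun r => ⨆ n : ℕ, (Set.Ioo (ρ/(n+2)) ρ).indicator W r := by
    funext r
    by_cases hr : r ∈ Set.Ioo (0:ℝ) ρ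
    · rw [Set.indicator_of_mem hr]
      obtain ⟨n, hn⟩ : ∃ n : ℕ, ρ/(n+2) < r := by
        obtain ⟨n, hn⟩ := exists_nat_gt (ρ / r)
        refine ⟨n, ?_⟩
        rw [div_lt_iff₀ (by positivity)]
        have := (div_lt_iff₀ hr.1).mp hn
        nlinarith [hr.1]
      refine le_antisymm (le_iSup_of_le n (le_of_eq ?_)) (iSup_le fun m =>
        (Set.indicator_le_self _ _) r)
      rw [Set.indicator_of_mem (Set.mem_Ioo.mpr ⟨hn, hr.2⟩)]
    · rw [Set.indicator_of_notMem hr]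
      exact (ENNReal.iSup_eq_zero.mpr fun n =>
        Set.indicator_of_notMem (fun h => hr (hsub n h)) _).symm
  have e1 : ∫⁻ r in Set.Ioo (0:ℝ) ρ, W r = ∫⁻ r, (Set.Ioo (0:ℝ) ρ).indicator W r :=
    (lintegral_indicator measurableSet_Ioo W).symm
  rw [e1, hsup, lintegral_iSup (fun n => hWm.indicator measurableSet_Ioo) hmono]
  apply iSup_le
  intro n
  have e2 : ∫⁻ r, (Set.Ioo (ρ/(n+2)) ρ).indicator W r = ∫⁻ r in Set.Ioo (ρ/(n+2)) ρ, W r :=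
    lintegral_indicator measurableSet_Ioo W
  rw [e2]
  have ha : (0:ℝ) < ρ/(n+2) := by positivity
  have hab : ρ/(n+2) ≤ ρ := by
    apply div_le_self hρ0.le
    have : (0:ℝ) ≤ n := Nat.cast_nonneg n
    linarith
  have hb : ∫⁻ r in Set.Ioo (ρ/(n+2)) ρ, W r
      = ENNReal.ofReal (((-Real.log (ρ/(n+2))) ^ (-ε) - (-Real.log ρ) ^ (-ε)) / (-ε)) := by
    have := loglint (t := -ε) (by linarith) ha hab hρ1
    simpa [show -ε - 1 = -ε - 1 from rfl] using this
  rw [hb]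
  apply ENNReal.ofReal_le_ofReal
  have h1 : (0:ℝ) ≤ (-Real.log (ρ/(n+2))) ^ (-ε) := by
    apply Real.rpow_nonneg
    have : Real.log (ρ/(n+2)) ≤ 0 := Real.log_nonpos ha.le (by linarith)
    linarith
  rw [show ((-Real.log (ρ/(n+2))) ^ (-ε) - (-Real.log ρ) ^ (-ε)) / (-ε)
      = ((-Real.log ρ) ^ (-ε) - (-Real.log (ρ/(n+2))) ^ (-ε)) / ε by ring]
  gcongr
  linarith

lemma cs_step {s : ℝ} (f : ℝ → ℂ) (hf : Measurable f) {r A : ℝ} (hr : 0 < r) (hA : A < 1) :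
    (∫⁻ ρ in Set.Ioo r A, ENNReal.ofReal (‖f ρ‖)) ^ 2 ≤
      (∫⁻ ρ in Set.Ioo r A, ENNReal.ofReal (‖f ρ‖ ^ 2 * ρ * (-Real.log ρ) ^ s)) *
      (∫⁻ ρ in Set.Ioo r A, ENNReal.ofReal (ρ⁻¹ * (-Real.log ρ) ^ (-s))) := by
  set w : ℝ → ℝ := fun ρ => ρ * (-Real.log ρ) ^ s with hwdef
  have hwpos : ∀ ρ ∈ Set.Ioo r A, 0 < w ρ := by
    intro ρ hρ
    have h1 : 0 < ρ := lt_trans hr hρ.1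
    have h2 : 0 < -Real.log ρ := by simpa using Real.log_neg h1 (lt_trans hρ.2 hA)
    have h3 : 0 < (-Real.log ρ) ^ s := Real.rpow_pos_of_pos h2 s
    exact mul_pos h1 h3
  set u : ℝ → ℝ≥0∞ := fun ρ => ENNReal.ofReal (‖f ρ‖ * Real.sqrt (w ρ)) with hu
  set v : ℝ → ℝ≥0∞ := fun ρ => ENNReal.ofReal ((Real.sqrt (w ρ))⁻¹) with hv
  have hwm : Measurable w := measurable_id.mul ((Real.measurable_log.neg).pow_const _)
  have hfa : Measurable fun ρ => ‖f ρ‖ := hf.norm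
  have hum : Measurable u := (hfa.mul (hwm.sqrt)).ennreal_ofReal
  have hvm : Measurable v := (hwm.sqrt.inv).ennreal_ofReal
  have hpq : Real.HolderConjugate 2 2 := Real.HolderConjugate.two_two
  have key := ENNReal.lintegral_mul_le_Lp_mul_Lq (volume.restrict (Set.Ioo r A)) hpq
    hum.aemeasurable hvm.aemeasurable
  have e0 : ∫⁻ ρ in Set.Ioo r A, ENNReal.ofReal (‖f ρ‖)
      = ∫⁻ ρ in Set.Ioo r A, (u * v) ρ := by
    apply lintegral_congr_ae
    filter_upwards [ae_restrict_mem measurableSet_Ioo] with ρ hρ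
    have h0 := hwpos ρ hρ
    have hs0 : 0 < Real.sqrt (w ρ) := Real.sqrt_pos.mpr h0
    simp only [Pi.mul_apply, hu, hv]
    rw [← ENNReal.ofReal_mul (by positivity)]
    congr 1
    field_simp
  have e1 : ∫⁻ ρ in Set.Ioo r A, u ρ ^ (2:ℝ)
      = ∫⁻ ρ in Set.Ioo r A, ENNReal.ofReal (‖f ρ‖ ^ 2 * ρ * (-Real.log ρ) ^ s) := by
    apply lintegral_congr_ae
    filter_upwards [ae_restrict_mem measurableSet_Ioo] with ρ hρ
    have h0 := hwpos ρ hρ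
    simp only [hu]
    rw [ENNReal.ofReal_rpow_of_nonneg (by positivity) (by norm_num)]
    congr 1
    rw [show ((2:ℝ)) = ((2:ℕ):ℝ) by norm_num, Real.rpow_natCast]
    rw [mul_pow, Real.sq_sqrt h0.le, hwdef]
    ring
  have e2 : ∫⁻ ρ in Set.Ioo r A, v ρ ^ (2:ℝ)
      = ∫⁻ ρ in Set.Ioo r A, ENNReal.ofReal (ρ⁻¹ * (-Real.log ρ) ^ (-s)) := by
    apply lintegral_congr_ae
    filter_upwards [ae_restrict_mem measurableSet_Ioo] with ρ hρ
    have h0 := hwpos ρ hρ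
    have h1 : 0 < ρ := lt_trans hr hρ.1
    have h2 : 0 < -Real.log ρ := by simpa using Real.log_neg h1 (lt_trans hρ.2 hA)
    simp only [hv]
    rw [ENNReal.ofReal_rpow_of_nonneg (by positivity) (by norm_num)]
    congr 1
    rw [show ((2:ℝ)) = ((2:ℕ):ℝ) by norm_num, Real.rpow_natCast]
    rw [inv_pow, Real.sq_sqrt h0.le, hwdef, mul_inv, Real.rpow_neg h2.le]
  calc (∫⁻ ρ in Set.Ioo r A, ENNReal.ofReal (‖f ρ‖)) ^ 2
      = (∫⁻ ρ in Set.Ioo r A, (u * v) ρ) ^ 2 := by rw [e0]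
    _ ≤ ((∫⁻ ρ in Set.Ioo r A, u ρ ^ (2:ℝ)) ^ (1/(2:ℝ))
          * (∫⁻ ρ in Set.Ioo r A, v ρ ^ (2:ℝ)) ^ (1/(2:ℝ))) ^ 2 :=
        pow_le_pow_left₀ zero_le key 2
    _ = (∫⁻ ρ in Set.Ioo r A, u ρ ^ (2:ℝ)) * (∫⁻ ρ in Set.Ioo r A, v ρ ^ (2:ℝ)) := by
        rw [mul_pow, ← ENNReal.rpow_natCast (_ ^ _) 2, ← ENNReal.rpow_natCast (_ ^ _) 2,
          ← ENNReal.rpow_mul, ← ENNReal.rpow_mul]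
        norm_num
    _ = _ := by rw [e1, e2]

/-- Weighted Hardy-type inequality, zero Fourier mode, weight exponent `k < 1`: for every
`A ∈ (0,1)` there is `C > 0` such that for every measurable `f : (0,A) → ℂ`,
`∫₀^A r⁻¹ (-log r)^(k-2) (∫_r^A |f ρ| dρ)² dr ≤ C ∫₀^A |f r|² r (-log r)^k dr`
in `[0,∞]`. -/
theorem hardy_weighted_zero_mode_k_lt_one (k : ℝ) (hk : k < 1)
    (A : ℝ) (hA0 : 0 < A) (hA1 : A < 1) :
    ∃ C : ℝ, 0 < C ∧ ∀ f : ℝ → ℂ, Measurable f →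
      ∫⁻ r in Set.Ioo (0 : ℝ) A,
          ENNReal.ofReal (r⁻¹ * (-Real.log r) ^ (k - 2)) *
            (∫⁻ ρ in Set.Ioo r A, ENNReal.ofReal (‖f ρ‖)) ^ 2
        ≤ ENNReal.ofReal C *
          ∫⁻ r in Set.Ioo (0 : ℝ) A,
            ENNReal.ofReal (‖f r‖ ^ 2 * r * (-Real.log r) ^ k) := by
  set ε : ℝ := (1-k)/2 with hεdef
  set s : ℝ := (k+1)/2 with hsdef
  have hε0 : 0 < ε := by rw [hεdef]; linarith
  refine ⟨ε⁻¹ * ε⁻¹, by positivity, ?_⟩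
  intro f hf
  set G : ℝ → ℝ≥0∞ := fun ρ => ENNReal.ofReal (‖f ρ‖ ^ 2 * ρ * (-Real.log ρ) ^ s)
    with hGdef
  set W1 : ℝ → ℝ≥0∞ := fun r => ENNReal.ofReal (r⁻¹ * (-Real.log r) ^ (-ε - 1)) with hW1def
  have hfa : Measurable fun ρ => ‖f ρ‖ := hf.norm
  have hGm : Measurable G := (((hfa.pow_const 2).mul measurable_id).mul
    ((Real.measurable_log.neg).pow_const s)).ennreal_ofReal
  have hW1m : Measurable W1 :=
    (measurable_inv.mul ((Real.measurable_log.neg).pow_const _)).ennreal_ofReal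
  have hlogA : 0 < -Real.log A := by simpa using Real.log_neg hA0 hA1
  -- Step A : pointwise Cauchy-Schwarz plus outer weight merge
  have stepA : ∫⁻ r in Set.Ioo (0:ℝ) A,
      ENNReal.ofReal (r⁻¹ * (-Real.log r) ^ (k - 2)) *
        (∫⁻ ρ in Set.Ioo r A, ENNReal.ofReal (‖f ρ‖)) ^ 2
      ≤ ∫⁻ r in Set.Ioo (0:ℝ) A,
          ENNReal.ofReal ε⁻¹ * (W1 r * ∫⁻ ρ in Set.Ioo r A, G ρ) := by
    apply lintegral_mono_ae
    filter_upwards [ae_restrict_mem measurableSet_Ioo] with r hr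
    have hr0 : 0 < r := hr.1
    have hr1 : r < 1 := lt_trans hr.2 hA1
    have hlr : 0 < -Real.log r := by simpa using Real.log_neg hr0 hr1
    have cs := cs_step (s := s) f hf hr0 hA1
    have hVle : (∫⁻ ρ in Set.Ioo r A, ENNReal.ofReal (ρ⁻¹ * (-Real.log ρ) ^ (-s)))
        ≤ ENNReal.ofReal ((-Real.log r) ^ ε / ε) := by
      have hexp : ε - 1 = -s := by rw [hsdef, hεdef]; ring
      have h := loglint (t := ε) hε0.ne' hr0 hr.2.le hA1
      rw [hexp] at h
      rw [h]
      apply ENNReal.ofReal_le_ofReal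
      have hA' : 0 ≤ (-Real.log A) ^ ε := Real.rpow_nonneg hlogA.le ε
      gcongr
      linarith
    calc ENNReal.ofReal (r⁻¹ * (-Real.log r) ^ (k - 2)) *
          (∫⁻ ρ in Set.Ioo r A, ENNReal.ofReal (‖f ρ‖)) ^ 2
        ≤ ENNReal.ofReal (r⁻¹ * (-Real.log r) ^ (k - 2)) *
            ((∫⁻ ρ in Set.Ioo r A, G ρ) * ENNReal.ofReal ((-Real.log r) ^ ε / ε)) := by
          exact mul_le_mul_right (le_trans cs (mul_le_mul_right hVle _)) _
      _ = (ENNReal.ofReal (r⁻¹ * (-Real.log r) ^ (k - 2)) *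
            ENNReal.ofReal ((-Real.log r) ^ ε / ε)) * (∫⁻ ρ in Set.Ioo r A, G ρ) := by ring
      _ = ENNReal.ofReal ε⁻¹ * (W1 r * ∫⁻ ρ in Set.Ioo r A, G ρ) := by
          rw [hW1def, ← mul_assoc,
            ← ENNReal.ofReal_mul (mul_nonneg (inv_nonneg.mpr hr0.le) (Real.rpow_nonneg hlr.le _)),
            ← ENNReal.ofReal_mul (inv_nonneg.mpr hε0.le)]
          congr 2
          rw [show (-ε - 1 : ℝ) = (k - 2) + ε by rw [hεdef]; ring, Real.rpow_add hlr]
          field_simp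
  -- Step C : Tonelli swap
  have stepC : ∫⁻ r in Set.Ioo (0:ℝ) A, W1 r * ∫⁻ ρ in Set.Ioo r A, G ρ
      = ∫⁻ ρ in Set.Ioo (0:ℝ) A, (∫⁻ r in Set.Ioo (0:ℝ) ρ, W1 r) * G ρ := by
    have hFm : AEMeasurable (Function.uncurry fun r ρ => W1 r * (Set.Ioi r).indicator G ρ)
        ((volume.restrict (Set.Ioo (0:ℝ) A)).prod (volume.restrict (Set.Ioo (0:ℝ) A))) := by
      have he : (Function.uncurry fun r ρ => W1 r * (Set.Ioi r).indicator G ρ)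
          = fun p : ℝ × ℝ => W1 p.1 * {q : ℝ × ℝ | q.1 < q.2}.indicator (fun q => G q.2) p := by
        funext p
        simp [Function.uncurry, Set.indicator_apply]
      rw [he]
      exact ((hW1m.comp measurable_fst).mul ((hGm.comp measurable_snd).indicator
        (measurableSet_lt measurable_fst measurable_snd))).aemeasurable
    have lhs_eq : ∫⁻ r in Set.Ioo (0:ℝ) A, W1 r * ∫⁻ ρ in Set.Ioo r A, G ρ
        = ∫⁻ r in Set.Ioo (0:ℝ) A, ∫⁻ ρ in Set.Ioo (0:ℝ) A,
            W1 r * (Set.Ioi r).indicator G ρ := by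
      apply lintegral_congr_ae
      filter_upwards [ae_restrict_mem measurableSet_Ioo] with r hr
      rw [lintegral_const_mul' _ _ ENNReal.ofReal_ne_top]
      congr 1
      have hseteq : Set.Ioi r ∩ Set.Ioo (0:ℝ) A = Set.Ioo r A := by
        ext x
        simp only [Set.mem_inter_iff, Set.mem_Ioi, Set.mem_Ioo]
        constructor
        · rintro ⟨h1, _, h3⟩; exact ⟨h1, h3⟩
        · rintro ⟨h1, h2⟩; exact ⟨h1, lt_trans hr.1 h1, h2⟩
      rw [lintegral_indicator measurableSet_Ioi, Measure.restrict_restrict measurableSet_Ioi,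
        hseteq]
    rw [lhs_eq, lintegral_lintegral_swap hFm]
    apply lintegral_congr_ae
    filter_upwards [ae_restrict_mem measurableSet_Ioo] with ρ hρ
    have he2 : ∀ r, W1 r * (Set.Ioi r).indicator G ρ = (Set.Iio ρ).indicator W1 r * G ρ := by
      intro r
      by_cases h : r < ρ
      · rw [Set.indicator_of_mem (Set.mem_Ioi.mpr h), Set.indicator_of_mem (Set.mem_Iio.mpr h)]
      · rw [Set.indicator_of_notMem (by simpa using h),
          Set.indicator_of_notMem (by simpa using h), mul_zero, zero_mul]
    simp_rw [he2]
    rw [lintegral_mul_const' _ _ ENNReal.ofReal_ne_top]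
    congr 1
    have hseteq : Set.Iio ρ ∩ Set.Ioo (0:ℝ) A = Set.Ioo (0:ℝ) ρ := by
      ext x
      simp only [Set.mem_inter_iff, Set.mem_Iio, Set.mem_Ioo]
      constructor
      · rintro ⟨h1, h2, _⟩; exact ⟨h2, h1⟩
      · rintro ⟨h1, h2⟩; exact ⟨h2, h1, lt_trans h2 hρ.2⟩
    rw [lintegral_indicator measurableSet_Iio, Measure.restrict_restrict measurableSet_Iio,
      hseteq]
  -- Step D : inner Hardy bound and weight recombination
  have stepD : ∫⁻ ρ in Set.Ioo (0:ℝ) A, (∫⁻ r in Set.Ioo (0:ℝ) ρ, W1 r) * G ρ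
      ≤ ENNReal.ofReal ε⁻¹ * ∫⁻ ρ in Set.Ioo (0:ℝ) A,
          ENNReal.ofReal (‖f ρ‖ ^ 2 * ρ * (-Real.log ρ) ^ k) := by
    rw [← lintegral_const_mul' _ _ ENNReal.ofReal_ne_top]
    apply lintegral_mono_ae
    filter_upwards [ae_restrict_mem measurableSet_Ioo] with ρ hρ
    have hρ0 : 0 < ρ := hρ.1
    have hρ1 : ρ < 1 := lt_trans hρ.2 hA1
    have hlρ : 0 < -Real.log ρ := by simpa using Real.log_neg hρ0 hρ1
    calc (∫⁻ r in Set.Ioo (0:ℝ) ρ, W1 r) * G ρ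
        ≤ ENNReal.ofReal ((-Real.log ρ) ^ (-ε) / ε) * G ρ := by
          refine mul_le_mul_left ?_ _
          rw [hW1def]
          exact inner_bound hε0 hρ0 hρ1
      _ = ENNReal.ofReal ε⁻¹ * ENNReal.ofReal (‖f ρ‖ ^ 2 * ρ * (-Real.log ρ) ^ k) := by
          rw [hGdef, ← ENNReal.ofReal_mul
              (div_nonneg (Real.rpow_nonneg hlρ.le _) hε0.le),
            ← ENNReal.ofReal_mul (inv_nonneg.mpr hε0.le)]
          congr 1
          rw [show (k : ℝ) = s + -ε by rw [hsdef, hεdef]; ring, Real.rpow_add hlρ]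
          field_simp
  calc ∫⁻ r in Set.Ioo (0:ℝ) A,
        ENNReal.ofReal (r⁻¹ * (-Real.log r) ^ (k - 2)) *
          (∫⁻ ρ in Set.Ioo r A, ENNReal.ofReal (‖f ρ‖)) ^ 2
      ≤ ∫⁻ r in Set.Ioo (0:ℝ) A, ENNReal.ofReal ε⁻¹ * (W1 r * ∫⁻ ρ in Set.Ioo r A, G ρ) := stepA
    _ = ENNReal.ofReal ε⁻¹ * ∫⁻ r in Set.Ioo (0:ℝ) A, W1 r * ∫⁻ ρ in Set.Ioo r A, G ρ :=
        lintegral_const_mul' _ _ ENNReal.ofReal_ne_top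
    _ = ENNReal.ofReal ε⁻¹ * ∫⁻ ρ in Set.Ioo (0:ℝ) A, (∫⁻ r in Set.Ioo (0:ℝ) ρ, W1 r) * G ρ := by
        rw [stepC]
    _ ≤ ENNReal.ofReal ε⁻¹ * (ENNReal.ofReal ε⁻¹ * ∫⁻ ρ in Set.Ioo (0:ℝ) A,
          ENNReal.ofReal (‖f ρ‖ ^ 2 * ρ * (-Real.log ρ) ^ k)) :=
        mul_le_mul_right stepD _
    _ = ENNReal.ofReal (ε⁻¹ * ε⁻¹) * ∫⁻ r in Set.Ioo (0:ℝ) A,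
          ENNReal.ofReal (‖f r‖ ^ 2 * r * (-Real.log r) ^ k) := by
        rw [ENNReal.ofReal_mul (inv_nonneg.mpr hε0.le), mul_assoc]
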